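/- For every real z with |z| < 1 and every real p, cosh(p·arcsin z)/√(1−z²) equals the power series ∑_{k≥0} z^{2k}/(2k)! · ∏_{n=1}^{k} (p² + (2n−1)²). -/

import Mathlib

open Real Finset Filter

noncomputable def chA (p : ℝ) (k : ℕ) : ℝ :=
  (∏ n ∈ Finset.range k, (p ^ 2 + (2 * (n : ℝ) + 1) ^ 2)) / (Nat.factorial (2 * k))

lemma chA_pos (p : ℝ) (k : ℕ) : 0 < chA p k := by
  apply div_pos
  · apply Finset.prod_pos
    intro n _
    positivity
  · exact_mod_cast Nat.factorial_pos _

lemma chA_zero (p : ℝ) : chA p 0 = 1 := by simp [chA]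

lemma chA_rec (p : ℝ) (k : ℕ) :
    chA p (k + 1) * ((2 * (k : ℝ) + 1) * (2 * k + 2)) =
      chA p k * (p ^ 2 + (2 * (k : ℝ) + 1) ^ 2) := by
  have hfac : (Nat.factorial (2 * (k + 1)) : ℝ) =
      (Nat.factorial (2 * k)) * ((2 * (k : ℝ) + 1) * (2 * k + 2)) := by
    have : 2 * (k + 1) = (2 * k + 1) + 1 := by ring
    rw [this, Nat.factorial_succ, Nat.factorial_succ]
    push_cast
    ring
  have hprod : (∏ n ∈ Finset.range (k + 1), (p ^ 2 + (2 * (n : ℝ) + 1) ^ 2)) =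
      (∏ n ∈ Finset.range k, (p ^ 2 + (2 * (n : ℝ) + 1) ^ 2)) *
        (p ^ 2 + (2 * (k : ℝ) + 1) ^ 2) := Finset.prod_range_succ _ _
  have h1 : (0 : ℝ) < Nat.factorial (2 * k) := by exact_mod_cast Nat.factorial_pos _
  have h2 : (0 : ℝ) < (2 * (k : ℝ) + 1) * (2 * k + 2) := by positivity
  rw [chA, chA, hfac, hprod]
  field_simp

lemma chA_summable_master (p : ℝ) {x : ℝ} (hx0 : 0 ≤ x) (hx1 : x < 1) :
    Summable (fun k : ℕ => chA p k * ((2 * (k : ℝ) + 1) * (2 * k + 2)) * x ^ k) := by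
  set f : ℕ → ℝ := fun k => chA p k * ((2 * (k : ℝ) + 1) * (2 * k + 2)) * x ^ k with hf
  have hfnn : ∀ k, 0 ≤ f k := by
    intro k
    have := (chA_pos p k).le
    positivity
  set b : ℕ → ℝ := fun k =>
    (1 + p ^ 2 * (((2 * (k : ℝ) + 1) ^ 2)⁻¹)) * (1 + (2 * (k : ℝ) + 2)⁻¹)
      * (1 + 2 * (2 * (k : ℝ) + 2)⁻¹) with hb
  have hA : Tendsto (fun k : ℕ => 2 * (k : ℝ) + 1) atTop atTop := by
    apply tendsto_atTop_add_const_right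
    exact (tendsto_natCast_atTop_atTop).const_mul_atTop two_pos
  have hB : Tendsto (fun k : ℕ => 2 * (k : ℝ) + 2) atTop atTop := by
    apply tendsto_atTop_add_const_right
    exact (tendsto_natCast_atTop_atTop).const_mul_atTop two_pos
  have hs : Tendsto (fun k : ℕ => (2 * (k : ℝ) + 1)⁻¹) atTop (nhds 0) :=
    tendsto_inv_atTop_zero.comp hA
  have ht : Tendsto (fun k : ℕ => (2 * (k : ℝ) + 2)⁻¹) atTop (nhds 0) :=
    tendsto_inv_atTop_zero.comp hB
  have hbt : Tendsto b atTop (nhds 1) := by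
    rw [hb]
    have h1 : Tendsto (fun k : ℕ => 1 + p ^ 2 * (((2 * (k : ℝ) + 1) ^ 2)⁻¹)) atTop (nhds 1) := by
      have := (((tendsto_pow_atTop two_ne_zero).comp hA).inv_tendsto_atTop).const_mul (p ^ 2)
      have := (tendsto_const_nhds (x := (1:ℝ)) (f := atTop)).add this
      simpa using this
    have h2 : Tendsto (fun k : ℕ => 1 + (2 * (k : ℝ) + 2)⁻¹) atTop (nhds 1) := by
      have := (tendsto_const_nhds (x := (1:ℝ)) (f := atTop)).add ht
      simpa using this
    have h3 : Tendsto (fun k : ℕ => 1 + 2 * (2 * (k : ℝ) + 2)⁻¹) atTop (nhds 1) := by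
      have := (tendsto_const_nhds (x := (1:ℝ)) (f := atTop)).add (ht.const_mul 2)
      simpa using this
    have := (h1.mul h2).mul h3
    norm_num at this
    exact this
  have hbx : Tendsto (fun k => b k * x) atTop (nhds x) := by
    have := hbt.mul_const x
    rwa [one_mul] at this
  have hr1 : (1 + x) / 2 < 1 := by linarith
  have hev : ∀ᶠ k in atTop, b k * x < (1 + x) / 2 := by
    exact hbx.eventually_lt_const (by linarith)
  apply summable_of_ratio_norm_eventually_le hr1
  filter_upwards [hev] with k hk
  have h1 : (2 * (k : ℝ) + 1) ≠ 0 := by positivity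
  have h2 : (2 * (k : ℝ) + 2) ≠ 0 := by positivity
  have hrec := chA_rec p k
  have hA1 : chA p (k + 1) = chA p k * (p ^ 2 + (2 * (k : ℝ) + 1) ^ 2) /
      ((2 * (k : ℝ) + 1) * (2 * (k : ℝ) + 2)) := by
    field_simp
    linarith [hrec]
  have key : f (k + 1) = (b k * x) * f k := by
    rw [hf, hb]
    simp only
    push_cast
    rw [hA1, pow_succ]
    field_simp
    ring
  have hbknn : 0 ≤ b k * x := by
    rw [hb]
    simp only
    positivity
  rw [Real.norm_of_nonneg (hfnn _), Real.norm_of_nonneg (hfnn _), key]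
  exact mul_le_mul_of_nonneg_right hk.le (hfnn k)

lemma one_le_fac (k : ℕ) : (1:ℝ) ≤ (2 * (k : ℝ) + 1) * (2 * k + 2) := by
  have : (0:ℝ) ≤ (k:ℝ) := Nat.cast_nonneg k
  nlinarith

lemma sq_lt_one' {w : ℝ} (hw : |w| < 1) : w ^ 2 < 1 := by
  have h := abs_lt.mp hw
  nlinarith [h.1, h.2]

lemma summable_S (p w : ℝ) (hw : |w| < 1) :
    Summable (fun k : ℕ => chA p k * w ^ (2 * k)) := by
  apply Summable.of_norm_bounded (chA_summable_master p (sq_nonneg w) (sq_lt_one' hw))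
  intro k
  have hA := (chA_pos p k).le
  have h1 : w ^ (2 * k) = (w ^ 2) ^ k := by rw [← pow_mul]
  rw [Real.norm_eq_abs, abs_mul, abs_of_nonneg hA, h1, abs_pow, abs_of_nonneg (sq_nonneg w)]
  have hnn : (0:ℝ) ≤ (w ^ 2) ^ k := pow_nonneg (sq_nonneg w) k
  exact mul_le_mul_of_nonneg_right (le_mul_of_one_le_right hA (one_le_fac k)) hnn

lemma summable_T (p w : ℝ) (hw : |w| < 1) :
    Summable (fun k : ℕ => p * (chA p k / (2 * (k : ℝ) + 1)) * w ^ (2 * k + 1)) := by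
  apply Summable.of_norm_bounded
    ((chA_summable_master p (sq_nonneg w) (sq_lt_one' hw)).mul_left (|p| * |w|))
  intro k
  have hA := (chA_pos p k)
  have hk1 : (0:ℝ) < 2 * (k : ℝ) + 1 := by positivity
  rw [Real.norm_eq_abs, abs_mul, abs_mul, abs_pow]
  rw [abs_of_nonneg (by positivity : (0:ℝ) ≤ chA p k / (2 * (k:ℝ) + 1))]
  have h1 : |w| ^ (2 * k + 1) = (w ^ 2) ^ k * |w| := by
    rw [pow_succ, pow_mul, sq_abs]
  rw [h1]
  have hfac := one_le_fac k
  have hdiv : chA p k / (2 * (k:ℝ) + 1) ≤ chA p k := by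
    rw [div_le_iff₀ hk1]; nlinarith [hA.le]
  have hnn : (0:ℝ) ≤ (w ^ 2) ^ k := pow_nonneg (sq_nonneg w) k
  calc |p| * (chA p k / (2 * (k:ℝ) + 1)) * ((w ^ 2) ^ k * |w|)
      ≤ |p| * chA p k * ((w ^ 2) ^ k * |w|) := by
        apply mul_le_mul_of_nonneg_right (by
          apply mul_le_mul_of_nonneg_left hdiv (abs_nonneg p)) (by positivity)
    _ = |p| * |w| * (chA p k * (w ^ 2) ^ k) := by ring
    _ ≤ |p| * |w| * (chA p k * ((2 * (k:ℝ) + 1) * (2 * k + 2)) * (w ^ 2) ^ k) := by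
        apply mul_le_mul_of_nonneg_left _ (by positivity)
        exact mul_le_mul_of_nonneg_right (le_mul_of_one_le_right hA.le (one_le_fac k)) hnn

lemma summable_D (p w : ℝ) (hw : |w| < 1) :
    Summable (fun k : ℕ => chA p k * ((2 * k : ℕ) * w ^ (2 * k - 1))) := by
  set q : ℝ := (|w| + 1) / 2 with hq
  have hq0 : 0 < q := by have := abs_nonneg w; rw [hq]; linarith
  have hq1 : q < 1 := by rw [hq]; linarith
  have hwq : |w| < q := by rw [hq]; linarith
  have hq2 : q ^ 2 < 1 := by nlinarith
  apply Summable.of_norm_bounded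
    ((chA_summable_master p (sq_nonneg q) hq2).mul_left (1 / q))
  intro k
  have hA := chA_pos p k
  rw [Real.norm_eq_abs, abs_mul, abs_of_nonneg hA.le, abs_mul, abs_pow]
  rcases Nat.eq_zero_or_pos k with rfl | hk
  · simp
    positivity
  · have hcast : |((2 * k : ℕ) : ℝ)| = 2 * (k:ℝ) := by
      rw [abs_of_nonneg (by positivity)]; push_cast; ring
    rw [hcast]
    have hpow : |w| ^ (2 * k - 1) ≤ q ^ (2 * k - 1) :=
      pow_le_pow_left₀ (abs_nonneg w) hwq.le _
    have hqpow : q ^ (2 * k - 1) = (q ^ 2) ^ k / q := by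
      rw [eq_div_iff hq0.ne', ← pow_succ, ← pow_mul]
      congr 1
      omega
    have hbound : 2 * (k:ℝ) ≤ (2 * (k:ℝ) + 1) * (2 * k + 2) := by
      have : (0:ℝ) ≤ (k:ℝ) := Nat.cast_nonneg k
      nlinarith
    calc chA p k * (2 * (k:ℝ) * |w| ^ (2 * k - 1))
        ≤ chA p k * ((2 * (k:ℝ) + 1) * (2 * k + 2) * ((q ^ 2) ^ k / q)) := by
          apply mul_le_mul_of_nonneg_left _ hA.le
          have h2 : (0:ℝ) ≤ 2 * (k:ℝ) := by positivity
          calc 2 * (k:ℝ) * |w| ^ (2 * k - 1) ≤ 2 * (k:ℝ) * q ^ (2 * k - 1) :=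
                mul_le_mul_of_nonneg_left hpow h2
            _ ≤ (2 * (k:ℝ) + 1) * (2 * k + 2) * q ^ (2 * k - 1) :=
                mul_le_mul_of_nonneg_right hbound (by positivity)
            _ = (2 * (k:ℝ) + 1) * (2 * k + 2) * ((q ^ 2) ^ k / q) := by rw [hqpow]
      _ = 1 / q * (chA p k * ((2 * (k:ℝ) + 1) * (2 * k + 2)) * (q ^ 2) ^ k) := by
          field_simp

noncomputable def chS (p w : ℝ) : ℝ := ∑' k : ℕ, chA p k * w ^ (2 * k)
noncomputable def chT (p w : ℝ) : ℝ :=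
  ∑' k : ℕ, p * (chA p k / (2 * (k : ℝ) + 1)) * w ^ (2 * k + 1)
noncomputable def chD (p w : ℝ) : ℝ := ∑' k : ℕ, chA p k * (((2 * k : ℕ) : ℝ) * w ^ (2 * k - 1))

lemma chD_identity (p t : ℝ) (ht : |t| < 1) :
    (1 - t ^ 2) * chD p t = p * chT p t + t * chS p t := by
  have hS : HasSum (fun k : ℕ => chA p k * t ^ (2 * k)) (chS p t) := (summable_S p t ht).hasSum
  have hT : HasSum (fun k : ℕ => p * (chA p k / (2 * (k : ℝ) + 1)) * t ^ (2 * k + 1)) (chT p t) :=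
    (summable_T p t ht).hasSum
  set f : ℕ → ℝ := fun k => chA p k * (((2 * k : ℕ) : ℝ) * t ^ (2 * k - 1)) with hf
  have hD : HasSum f (chD p t) := (summable_D p t ht).hasSum
  have hf0 : f 0 = 0 := by simp [hf]
  have hD1 : HasSum (fun n => f (n + 1)) (chD p t) := by
    refine (hasSum_nat_add_iff 1).mpr ?_
    simpa [hf0] using hD
  have hzero : ∀ k : ℕ, f (k + 1) - t ^ 2 * f k - t * (chA p k * t ^ (2 * k)) -
      p * (p * (chA p k / (2 * (k : ℝ) + 1)) * t ^ (2 * k + 1)) = 0 := by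
    intro k
    have hexp1 : f (k + 1) = chA p (k + 1) * ((2 * (k : ℝ) + 2) * t ^ (2 * k + 1)) := by
      rw [hf]
      have h1 : 2 * (k + 1) - 1 = 2 * k + 1 := by omega
      simp only [h1]
      push_cast
      ring
    have hexp2 : t ^ 2 * f k = chA p k * (2 * (k : ℝ) * t ^ (2 * k + 1)) := by
      rw [hf]
      rcases k with _ | n
      · simp
      · have h1 : 2 * (n + 1) - 1 = 2 * n + 1 := by omega
        have h2 : 2 * (n + 1) + 1 = (2 * n + 1) + 2 := by omega
        simp only [h1, h2, pow_add]
        push_cast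
        ring
    rw [hexp1, hexp2]
    have hk1 : (2 * (k : ℝ) + 1) ≠ 0 := by positivity
    have hrec := chA_rec p k
    field_simp
    linear_combination t ^ (2 * k + 1) * hrec
  have h2 : ∑' k : ℕ, (f (k + 1) - t ^ 2 * f k - t * (chA p k * t ^ (2 * k)) -
      p * (p * (chA p k / (2 * (k : ℝ) + 1)) * t ^ (2 * k + 1))) =
      chD p t - t ^ 2 * chD p t - t * chS p t - p * chT p t :=
    HasSum.tsum_eq (((hD1.sub (hD.mul_left (t ^ 2))).sub (hS.mul_left t)).sub (hT.mul_left p))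
  have h3 : chD p t - t ^ 2 * chD p t - t * chS p t - p * chT p t = 0 := by
    rw [← h2, tsum_congr hzero, tsum_zero]
  linear_combination h3

lemma sq_mem_bound {r y : ℝ} (hy : y ∈ Set.Ioo (-r) r) (k : ℕ) :
    |y| ^ k ≤ r ^ k := by
  apply pow_le_pow_left₀ (abs_nonneg y)
  exact (abs_lt.mpr ⟨hy.1, hy.2⟩).le

lemma hasDerivAt_chT (p : ℝ) {r : ℝ} (hr0 : 0 < r) (hr1 : r < 1) {w : ℝ}
    (hw : w ∈ Set.Ioo (-r) r) : HasDerivAt (chT p) (p * chS p w) w := by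
  have hr2 : r ^ 2 < 1 := by nlinarith
  have master := (chA_summable_master p (sq_nonneg r) hr2).mul_left |p|
  have hy0 : (0:ℝ) ∈ Set.Ioo (-r) r := ⟨by linarith, hr0⟩
  have hg : ∀ (k : ℕ) (y : ℝ), y ∈ Set.Ioo (-r) r →
      HasDerivAt (fun z => p * (chA p k / (2 * (k : ℝ) + 1)) * z ^ (2 * k + 1))
        (p * (chA p k * y ^ (2 * k))) y := by
    intro k y _
    have h := (hasDerivAt_pow (2 * k + 1) y).const_mul (p * (chA p k / (2 * (k : ℝ) + 1)))
    refine h.congr_deriv ?_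
    have hk1 : (2 * (k : ℝ) + 1) ≠ 0 := by positivity
    simp only [Nat.add_sub_cancel]
    push_cast
    field_simp
  have hg' : ∀ (k : ℕ) (y : ℝ), y ∈ Set.Ioo (-r) r →
      ‖p * (chA p k * y ^ (2 * k))‖ ≤
        |p| * (chA p k * ((2 * (k : ℝ) + 1) * (2 * k + 2)) * (r ^ 2) ^ k) := by
    intro k y hy
    have hA := (chA_pos p k).le
    rw [Real.norm_eq_abs, abs_mul, abs_mul, abs_of_nonneg hA, abs_pow]
    have h1 : |y| ^ (2 * k) ≤ (r ^ 2) ^ k := by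
      rw [← pow_mul]
      exact sq_mem_bound hy _
    have hfac : (1:ℝ) ≤ (2 * (k : ℝ) + 1) * (2 * k + 2) := by
      have : (0:ℝ) ≤ (k:ℝ) := Nat.cast_nonneg k
      nlinarith
    have hnn : (0:ℝ) ≤ (r ^ 2) ^ k := by positivity
    calc |p| * (chA p k * |y| ^ (2 * k)) ≤ |p| * (chA p k * (r ^ 2) ^ k) := by
          apply mul_le_mul_of_nonneg_left _ (abs_nonneg p)
          exact mul_le_mul_of_nonneg_left h1 hA
      _ ≤ |p| * (chA p k * ((2 * (k : ℝ) + 1) * (2 * k + 2)) * (r ^ 2) ^ k) := by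
          apply mul_le_mul_of_nonneg_left _ (abs_nonneg p)
          exact mul_le_mul_of_nonneg_right (le_mul_of_one_le_right hA hfac) hnn
  have hg0 : Summable (fun k : ℕ => p * (chA p k / (2 * (k : ℝ) + 1)) * (0:ℝ) ^ (2 * k + 1)) := by
    apply summable_of_ne_finset_zero (s := ∅)
    intro k _
    rw [zero_pow (by omega : 2 * k + 1 ≠ 0)]
    ring
  have key := hasDerivAt_tsum_of_isPreconnected master isOpen_Ioo isPreconnected_Ioo
    hg hg' hy0 hg0 hw
  have hval : (∑' k : ℕ, p * (chA p k * w ^ (2 * k))) = p * chS p w := by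
    rw [chS, tsum_mul_left]
  rw [← hval]
  exact key

lemma hasDerivAt_chS (p : ℝ) {r : ℝ} (hr0 : 0 < r) (hr1 : r < 1) {w : ℝ}
    (hw : w ∈ Set.Ioo (-r) r) : HasDerivAt (chS p) (chD p w) w := by
  have hr2 : r ^ 2 < 1 := by nlinarith
  have master := (chA_summable_master p (sq_nonneg r) hr2).mul_left (1 / r)
  have hy0 : (0:ℝ) ∈ Set.Ioo (-r) r := ⟨by linarith, hr0⟩
  have hg : ∀ (k : ℕ) (y : ℝ), y ∈ Set.Ioo (-r) r →
      HasDerivAt (fun z => chA p k * z ^ (2 * k))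
        (chA p k * (((2 * k : ℕ) : ℝ) * y ^ (2 * k - 1))) y := by
    intro k y _
    exact (hasDerivAt_pow (2 * k) y).const_mul (chA p k)
  have hg' : ∀ (k : ℕ) (y : ℝ), y ∈ Set.Ioo (-r) r →
      ‖chA p k * (((2 * k : ℕ) : ℝ) * y ^ (2 * k - 1))‖ ≤
        1 / r * (chA p k * ((2 * (k : ℝ) + 1) * (2 * k + 2)) * (r ^ 2) ^ k) := by
    intro k y hy
    have hA := chA_pos p k
    rw [Real.norm_eq_abs, abs_mul, abs_of_nonneg hA.le, abs_mul, abs_pow]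
    rcases Nat.eq_zero_or_pos k with rfl | hk
    · simp
      positivity
    · have hcast : |((2 * k : ℕ) : ℝ)| = 2 * (k : ℝ) := by
        rw [abs_of_nonneg (by positivity)]; push_cast; ring
      rw [hcast]
      have hpow : |y| ^ (2 * k - 1) ≤ r ^ (2 * k - 1) := sq_mem_bound hy _
      have hqpow : r ^ (2 * k - 1) = (r ^ 2) ^ k / r := by
        rw [eq_div_iff hr0.ne', ← pow_succ, ← pow_mul]
        congr 1
        omega
      have hbound : 2 * (k : ℝ) ≤ (2 * (k : ℝ) + 1) * (2 * k + 2) := by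
        have : (0:ℝ) ≤ (k:ℝ) := Nat.cast_nonneg k
        nlinarith
      calc chA p k * (2 * (k : ℝ) * |y| ^ (2 * k - 1))
          ≤ chA p k * ((2 * (k : ℝ) + 1) * (2 * k + 2) * ((r ^ 2) ^ k / r)) := by
            apply mul_le_mul_of_nonneg_left _ hA.le
            calc 2 * (k : ℝ) * |y| ^ (2 * k - 1) ≤ 2 * (k : ℝ) * r ^ (2 * k - 1) :=
                  mul_le_mul_of_nonneg_left hpow (by positivity)
              _ ≤ (2 * (k : ℝ) + 1) * (2 * k + 2) * r ^ (2 * k - 1) :=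
                  mul_le_mul_of_nonneg_right hbound (by positivity)
              _ = (2 * (k : ℝ) + 1) * (2 * k + 2) * ((r ^ 2) ^ k / r) := by rw [hqpow]
        _ = 1 / r * (chA p k * ((2 * (k : ℝ) + 1) * (2 * k + 2)) * (r ^ 2) ^ k) := by
            field_simp
  have hg0 : Summable (fun k : ℕ => chA p k * (0:ℝ) ^ (2 * k)) := by
    apply summable_of_ne_finset_zero (s := {0})
    intro k hk
    simp only [Finset.mem_singleton] at hk
    rw [zero_pow (by omega : 2 * k ≠ 0)]
    ring
  exact hasDerivAt_tsum_of_isPreconnected master isOpen_Ioo isPreconnected_Ioo hg hg' hy0 hg0 hw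

lemma cosh_arcsin_eq_chS (z p : ℝ) (hz : |z| < 1) :
    Real.cosh (p * Real.arcsin z) / Real.sqrt (1 - z ^ 2) = chS p z := by
  set r : ℝ := (|z| + 1) / 2 with hrdef
  have habs := abs_nonneg z
  have hr0 : 0 < r := by rw [hrdef]; linarith
  have hr1 : r < 1 := by rw [hrdef]; linarith
  have hzr : z ∈ Set.Ioo (-r) r := by
    have := abs_lt.mp (show |z| < r by rw [hrdef]; linarith)
    exact ⟨this.1, this.2⟩
  have hrr : 1 - r ^ 2 > 0 := by nlinarith
  -- the clamped vector field
  set c : ℝ → ℝ := fun t => max (-r) (min r t) with hc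
  have hc_mem : ∀ t, -r ≤ c t ∧ c t ≤ r := by
    intro t
    constructor
    · exact le_max_left _ _
    · rw [hc]
      simp only
      rw [max_le_iff]
      constructor
      · linarith
      · exact min_le_left _ _
  have hc_eq : ∀ t ∈ Set.Ioo (-r) r, c t = t := by
    intro t ht
    rw [hc]
    simp only
    rw [min_eq_right ht.2.le, max_eq_right ht.1.le]
  have hc_den : ∀ t, 1 - r ^ 2 ≤ 1 - c t ^ 2 := by
    intro t
    have h := hc_mem t
    nlinarith [h.1, h.2]
  set v : ℝ → ℝ × ℝ → ℝ × ℝ := fun t y =>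
    (p * y.2, (p * y.1 + c t * y.2) / (1 - c t ^ 2)) with hv_def
  set Kr : ℝ := |p| + (|p| + 1) / (1 - r ^ 2) with hKr
  have hKr0 : 0 ≤ Kr := by
    rw [hKr]
    have := abs_nonneg p
    positivity
  have hv : ∀ t, LipschitzOnWith Kr.toNNReal (v t) Set.univ := by
    intro t
    apply LipschitzWith.lipschitzOnWith
    apply LipschitzWith.of_dist_le_mul
    intro x y
    have hd1 : dist x.1 y.1 ≤ dist x y := by
      rw [Prod.dist_eq]; exact le_max_left _ _
    have hd2 : dist x.2 y.2 ≤ dist x y := by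
      rw [Prod.dist_eq]; exact le_max_right _ _
    have hdnn : 0 ≤ dist x y := dist_nonneg
    rw [Real.coe_toNNReal _ hKr0, Prod.dist_eq]
    have hden := hc_den t
    have hcm := hc_mem t
    have hcabs : |c t| ≤ r := abs_le.mpr ⟨hcm.1, hcm.2⟩
    rw [max_le_iff]
    have habs1 : |x.1 - y.1| ≤ dist x y := by rw [← Real.dist_eq]; exact hd1
    have habs2 : |x.2 - y.2| ≤ dist x y := by rw [← Real.dist_eq]; exact hd2
    constructor
    · show dist (p * x.2) (p * y.2) ≤ Kr * dist x y
      rw [Real.dist_eq]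
      have : p * x.2 - p * y.2 = p * (x.2 - y.2) := by ring
      rw [this, abs_mul]
      have h1 : |p| * |x.2 - y.2| ≤ |p| * dist x y :=
        mul_le_mul_of_nonneg_left habs2 (abs_nonneg p)
      have h2 : |p| * dist x y ≤ Kr * dist x y := by
        apply mul_le_mul_of_nonneg_right _ hdnn
        rw [hKr]
        have : 0 ≤ (|p| + 1) / (1 - r ^ 2) := by positivity
        linarith
      calc |p| * |x.2 - y.2| ≤ |p| * dist x y := h1
        _ ≤ Kr * dist x y := h2
    · show dist ((p * x.1 + c t * x.2) / (1 - c t ^ 2)) ((p * y.1 + c t * y.2) / (1 - c t ^ 2))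
          ≤ Kr * dist x y
      rw [Real.dist_eq]
      have heq : (p * x.1 + c t * x.2) / (1 - c t ^ 2) - (p * y.1 + c t * y.2) / (1 - c t ^ 2)
          = (p * (x.1 - y.1) + c t * (x.2 - y.2)) / (1 - c t ^ 2) := by
        rw [div_sub_div_same]
        congr 1
        ring
      rw [heq, abs_div, abs_of_pos (by linarith : (0:ℝ) < 1 - c t ^ 2)]
      have hnum : |p * (x.1 - y.1) + c t * (x.2 - y.2)| ≤ (|p| + 1) * dist x y := by
        calc |p * (x.1 - y.1) + c t * (x.2 - y.2)|
            ≤ |p * (x.1 - y.1)| + |c t * (x.2 - y.2)| := abs_add_le _ _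
          _ = |p| * |x.1 - y.1| + |c t| * |x.2 - y.2| := by rw [abs_mul, abs_mul]
          _ ≤ |p| * dist x y + 1 * dist x y := by
              apply add_le_add
              · exact mul_le_mul_of_nonneg_left habs1 (abs_nonneg p)
              · exact mul_le_mul (by linarith : |c t| ≤ 1) habs2 (abs_nonneg _) zero_le_one
          _ = (|p| + 1) * dist x y := by ring
      calc |p * (x.1 - y.1) + c t * (x.2 - y.2)| / (1 - c t ^ 2)
          ≤ ((|p| + 1) * dist x y) / (1 - r ^ 2) := by
            apply div_le_div₀ (by positivity) hnum hrr hden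
        _ = ((|p| + 1) / (1 - r ^ 2)) * dist x y := by ring
        _ ≤ Kr * dist x y := by
            apply mul_le_mul_of_nonneg_right _ hdnn
            rw [hKr]
            have := abs_nonneg p
            linarith
  -- the two solutions
  set F : ℝ → ℝ × ℝ := fun t =>
    (Real.sinh (p * Real.arcsin t), Real.cosh (p * Real.arcsin t) / Real.sqrt (1 - t ^ 2))
    with hF_def
  set G : ℝ → ℝ × ℝ := fun t => (chT p t, chS p t) with hG_def
  have hF' : ∀ t ∈ Set.Ioo (-r) r, HasDerivAt F (v t (F t)) t := by
    intro t ht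
    have ht1 : |t| < 1 := by
      rw [abs_lt]
      exact ⟨by linarith [ht.1], by linarith [ht.2]⟩
    have htne1 : t ≠ 1 := by intro h; rw [h] at ht1; simp at ht1
    have htnem1 : t ≠ -1 := by intro h; rw [h] at ht1; simp at ht1
    have h1t : 0 < 1 - t ^ 2 := by nlinarith [abs_lt.mp ht1]
    set s : ℝ := Real.sqrt (1 - t ^ 2) with hs_def
    have hs0 : 0 < s := Real.sqrt_pos.mpr h1t
    have hs2 : s ^ 2 = 1 - t ^ 2 := Real.sq_sqrt h1t.le
    have ha : HasDerivAt Real.arcsin (1 / s) t := Real.hasDerivAt_arcsin htnem1 htne1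
    have hpa : HasDerivAt (fun t => p * Real.arcsin t) (p * (1 / s)) t := ha.const_mul p
    have hsinh : HasDerivAt (fun t => Real.sinh (p * Real.arcsin t))
        (Real.cosh (p * Real.arcsin t) * (p * (1 / s))) t := hpa.sinh
    have hcosh : HasDerivAt (fun t => Real.cosh (p * Real.arcsin t))
        (Real.sinh (p * Real.arcsin t) * (p * (1 / s))) t := hpa.cosh
    have hinner : HasDerivAt (fun t : ℝ => 1 - t ^ 2) (-(2 * t)) t := by
      have h := (hasDerivAt_pow 2 t).const_sub 1
      refine h.congr_deriv ?_
      simp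
    have hden : HasDerivAt (fun t : ℝ => Real.sqrt (1 - t ^ 2)) (-(2 * t) / (2 * s)) t :=
      hinner.sqrt h1t.ne'
    have hdiv := hcosh.div hden hs0.ne'
    have hcor : v t (F t) =
        (p * (Real.cosh (p * Real.arcsin t) / s),
          (p * Real.sinh (p * Real.arcsin t) + t * (Real.cosh (p * Real.arcsin t) / s))
            / (1 - t ^ 2)) := by
      simp only [hv_def, hF_def]
      rw [hc_eq t ht]
    rw [hcor, hF_def]
    apply HasDerivAt.prodMk
    · refine hsinh.congr_deriv ?_
      ring
    · refine hdiv.congr_deriv ?_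
      rw [← hs_def, ← hs2]
      field_simp
      ring
  have hG' : ∀ t ∈ Set.Ioo (-r) r, HasDerivAt G (v t (G t)) t := by
    intro t ht
    have ht1 : |t| < 1 := by
      rw [abs_lt]
      exact ⟨by linarith [ht.1], by linarith [ht.2]⟩
    have h1t : 0 < 1 - t ^ 2 := by nlinarith [abs_lt.mp ht1]
    have hDid : chD p t = (p * chT p t + t * chS p t) / (1 - t ^ 2) := by
      rw [eq_div_iff h1t.ne']
      linear_combination chD_identity p t ht1
    have hcor : v t (G t) = (p * chS p t, (p * chT p t + t * chS p t) / (1 - t ^ 2)) := by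
      simp only [hv_def, hG_def]
      rw [hc_eq t ht]
    rw [hcor, hG_def]
    apply HasDerivAt.prodMk
    · exact hasDerivAt_chT p hr0 hr1 ht
    · rw [← hDid]
      exact hasDerivAt_chS p hr0 hr1 ht
  have heq0 : F 0 = G 0 := by
    simp only [hF_def, hG_def, Prod.mk.injEq]
    have h1 : Real.sinh (p * Real.arcsin 0) = 0 := by simp [Real.arcsin_zero]
    have h2 : Real.cosh (p * Real.arcsin 0) / Real.sqrt (1 - 0 ^ 2) = 1 := by
      simp [Real.arcsin_zero]
    have h3 : chT p 0 = 0 := by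
      rw [chT]
      convert tsum_zero with k
      rw [zero_pow (by omega : 2 * k + 1 ≠ 0)]
      ring
    have h4 : chS p 0 = 1 := by
      rw [chS]
      rw [tsum_eq_single 0]
      · simp [chA_zero]
      · intro k hk
        rw [zero_pow (by omega : 2 * k ≠ 0)]
        ring
    rw [h1, h2, h3, h4]
    exact ⟨rfl, rfl⟩
  have huniq := ODE_solution_unique_of_mem_Ioo (s := fun _ => (Set.univ : Set (ℝ × ℝ))) (fun t _ => hv t)
    (t₀ := 0) ⟨by linarith, hr0⟩
    (fun t ht => ⟨hF' t ht, Set.mem_univ _⟩)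
    (fun t ht => ⟨hG' t ht, Set.mem_univ _⟩) heq0
  have hfg := huniq hzr
  have := congrArg Prod.snd hfg
  rw [hF_def, hG_def] at this
  exact this

/-- For `|z| < 1` and `p ∈ ℝ`,
`cosh(p arcsin z)/√(1-z²) = ∑_{k≥0} z^{2k}/(2k)! ∏_{n=1}^k (p² + (2n-1)²)`. -/
theorem cosh_arcsin_series (z p : ℝ) (hz : |z| < 1) :
    Real.cosh (p * Real.arcsin z) / Real.sqrt (1 - z ^ 2) =
      ∑' k : ℕ, z ^ (2 * k) / (Nat.factorial (2 * k)) *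
        ∏ n ∈ Finset.range k, (p ^ 2 + (2 * (n : ℝ) + 1) ^ 2) := by
  rw [cosh_arcsin_eq_chS z p hz]
  unfold chS
  apply tsum_congr
  intro k
  unfold chA
  ring
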